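/- Suppose m₁ = m₂. Then for any x ∈ 𝒟 one has S(γ₁(−t)) = γ₂(t) for all t ∈ ℝ, where γ₁ and γ₂ denote the solutions of (*) with initial conditions x and S(x), respectively. -/

import Mathlib

/-- The constant `m = m₁ + m₂ + 2/g`. -/
noncomputable def mconst (g m₁ m₂ : ℕ) : ℝ := (m₁ : ℝ) + (m₂ : ℝ) + 2 / (g : ℝ)

/-- The angle `θ* = arctan √(m₁/m₂)`. -/
noncomputable def thetaStar (m₁ m₂ : ℕ) : ℝ :=
  Real.arctan (Real.sqrt ((m₁ : ℝ) / (m₂ : ℝ)))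

/-- `l(θ) = m₁ cos² θ - m₂ sin² θ`. -/
noncomputable def lfun (m₁ m₂ : ℕ) (θ : ℝ) : ℝ :=
  (m₁ : ℝ) * Real.cos θ ^ 2 - (m₂ : ℝ) * Real.sin θ ^ 2

/-- `(ξ, θ, α)` is a (globally defined) solution of the ODE system (*):
`ξ' = cos α · sin 2θ`, `θ' = sin α · sin 2θ`,
`α' = sin α · sin 2θ · (exp((4/g)ξ) - m) + 2 cos α · l(θ)`. -/
def IsSolution (g m₁ m₂ : ℕ) (ξ θ α : ℝ → ℝ) : Prop :=
  ∀ t : ℝ,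
    HasDerivAt ξ (Real.cos (α t) * Real.sin (2 * θ t)) t ∧
    HasDerivAt θ (Real.sin (α t) * Real.sin (2 * θ t)) t ∧
    HasDerivAt α
      (Real.sin (α t) * Real.sin (2 * θ t) *
          (Real.exp (4 / (g : ℝ) * ξ t) - mconst g m₁ m₂) +
        2 * Real.cos (α t) * lfun m₁ m₂ (θ t)) t

noncomputable def vf (g m₁ m₂ : ℕ) (p : ℝ × ℝ × ℝ) : ℝ × ℝ × ℝ :=
  (Real.cos p.2.2 * Real.sin (2 * p.2.1),
   Real.sin p.2.2 * Real.sin (2 * p.2.1),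
   Real.sin p.2.2 * Real.sin (2 * p.2.1) *
       (Real.exp (4 / (g : ℝ) * p.1) - mconst g m₁ m₂) +
     2 * Real.cos p.2.2 * lfun m₁ m₂ p.2.1)

lemma vf_contDiff (g m₁ m₂ : ℕ) : ContDiff ℝ 1 (vf g m₁ m₂) := by
  unfold vf lfun
  have hx : ContDiff ℝ 1 (fun p : ℝ × ℝ × ℝ => p.1) := contDiff_fst
  have hθ : ContDiff ℝ 1 (fun p : ℝ × ℝ × ℝ => p.2.1) := contDiff_fst.comp contDiff_snd
  have hα : ContDiff ℝ 1 (fun p : ℝ × ℝ × ℝ => p.2.2) := contDiff_snd.comp contDiff_snd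
  have hcos : ContDiff ℝ 1 (fun p : ℝ × ℝ × ℝ => Real.cos p.2.2) := Real.contDiff_cos.comp hα
  have hsin : ContDiff ℝ 1 (fun p : ℝ × ℝ × ℝ => Real.sin p.2.2) := Real.contDiff_sin.comp hα
  have hs2 : ContDiff ℝ 1 (fun p : ℝ × ℝ × ℝ => Real.sin (2 * p.2.1)) :=
    Real.contDiff_sin.comp (contDiff_const.mul hθ)
  have he : ContDiff ℝ 1 (fun p : ℝ × ℝ × ℝ => Real.exp (4 / (g : ℝ) * p.1)) :=
    Real.contDiff_exp.comp (contDiff_const.mul hx)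
  have hl : ContDiff ℝ 1 (fun p : ℝ × ℝ × ℝ =>
      (m₁ : ℝ) * Real.cos p.2.1 ^ 2 - (m₂ : ℝ) * Real.sin p.2.1 ^ 2) :=
    (contDiff_const.mul ((Real.contDiff_cos.comp hθ).pow 2)).sub
      (contDiff_const.mul ((Real.contDiff_sin.comp hθ).pow 2))
  exact (hcos.mul hs2).prodMk ((hsin.mul hs2).prodMk
    (((hsin.mul hs2).mul (he.sub contDiff_const)).add ((contDiff_const.mul hcos).mul hl)))

/-- A solution triple gives a curve solving the autonomous ODE `x' = vf x`. -/
lemma isSolution_hasDerivAt {g m₁ m₂ : ℕ} {ξ θ α : ℝ → ℝ}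
    (h : IsSolution g m₁ m₂ ξ θ α) (t : ℝ) :
    HasDerivAt (fun s => (ξ s, θ s, α s)) (vf g m₁ m₂ (ξ t, θ t, α t)) t := by
  obtain ⟨h1, h2, h3⟩ := h t
  exact h1.prodMk (h2.prodMk h3)

/-- vf is Lipschitz on closed balls. -/
lemma vf_lipschitz (g m₁ m₂ : ℕ) (R : ℝ) :
    ∃ K : NNReal, LipschitzOnWith K (vf g m₁ m₂) (Metric.closedBall (0 : ℝ × ℝ × ℝ) R) := by
  obtain ⟨C, hC⟩ := (isCompact_closedBall (0 : ℝ × ℝ × ℝ) R).exists_bound_of_continuousOn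
    ((vf_contDiff g m₁ m₂).continuous_fderiv one_ne_zero).continuousOn
  refine ⟨C.toNNReal, Convex.lipschitzOnWith_of_nnnorm_hasFDerivWithin_le
    (f' := fun x => fderiv ℝ (vf g m₁ m₂) x)
    (fun x _ => (((vf_contDiff g m₁ m₂).differentiable one_ne_zero) x).hasFDerivAt.hasFDerivWithinAt)
    (fun x hx => ?_) (convex_closedBall _ _)⟩
  rw [← NNReal.coe_le_coe, coe_nnnorm, Real.coe_toNNReal']
  exact (hC x hx).trans (le_max_left _ _)

/-- If `m₁ = m₂` then the involution `S(ξ, θ, α) = (ξ, 2θ* - θ, π - α)`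
conjugates time-reversed solutions of (*) to solutions: if `γ₁, γ₂` are the
solutions with initial conditions `x ∈ 𝒟` and `S(x)` respectively, then
`S(γ₁(-t)) = γ₂(t)` for all `t`. -/
theorem stmt4 (g m₁ m₂ : ℕ) (hg : g = 1 ∨ g = 2 ∨ g = 3 ∨ g = 4 ∨ g = 6)
    (hm₁ : 0 < m₁) (hm₂ : 0 < m₂)
    (hm : m₁ = m₂) (a b c : ℝ) (hb : b ∈ Set.Ioo 0 (Real.pi / 2))
    (ξ₁ θ₁ α₁ ξ₂ θ₂ α₂ : ℝ → ℝ)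
    (h1 : IsSolution g m₁ m₂ ξ₁ θ₁ α₁)
    (h1i : ξ₁ 0 = a ∧ θ₁ 0 = b ∧ α₁ 0 = c)
    (h2 : IsSolution g m₁ m₂ ξ₂ θ₂ α₂)
    (h2i : ξ₂ 0 = a ∧ θ₂ 0 = 2 * thetaStar m₁ m₂ - b ∧ α₂ 0 = Real.pi - c) :
    ∀ t : ℝ, ξ₂ t = ξ₁ (-t) ∧ θ₂ t = 2 * thetaStar m₁ m₂ - θ₁ (-t) ∧
      α₂ t = Real.pi - α₁ (-t) := by
  subst hm
  have hts : 2 * thetaStar m₁ m₁ = Real.pi / 2 := by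
    unfold thetaStar
    rw [div_self (by exact_mod_cast hm₁.ne' : (m₁ : ℝ) ≠ 0), Real.sqrt_one, Real.arctan_one]
    ring
  rw [hts] at h2i ⊢
  set c₂ : ℝ → ℝ × ℝ × ℝ := fun s => (ξ₂ s, θ₂ s, α₂ s) with hc₂
  set c₁ : ℝ → ℝ × ℝ × ℝ :=
    fun s => (ξ₁ (-s), Real.pi / 2 - θ₁ (-s), Real.pi - α₁ (-s)) with hc₁
  -- c₁ is a solution of the same autonomous ODE
  have key : ∀ τ : ℝ, HasDerivAt c₁ (vf g m₁ m₁ (c₁ τ)) τ := by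
    intro τ
    obtain ⟨hx, hθ, hα⟩ := h1 (-τ)
    have d1 : HasDerivAt (fun s => ξ₁ (-s))
        (-(Real.cos (α₁ (-τ)) * Real.sin (2 * θ₁ (-τ)))) τ := by
      simpa [Function.comp_def] using hx.comp τ (hasDerivAt_neg τ)
    have d2 : HasDerivAt (fun s => Real.pi / 2 - θ₁ (-s))
        (Real.sin (α₁ (-τ)) * Real.sin (2 * θ₁ (-τ))) τ := by
      simpa [Function.comp_def, Pi.sub_def] using (hasDerivAt_const τ (Real.pi / 2)).sub (hθ.comp τ (hasDerivAt_neg τ))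
    have d3 : HasDerivAt (fun s => Real.pi - α₁ (-s))
        (Real.sin (α₁ (-τ)) * Real.sin (2 * θ₁ (-τ)) *
            (Real.exp (4 / (g : ℝ) * ξ₁ (-τ)) - mconst g m₁ m₁) +
          2 * Real.cos (α₁ (-τ)) * lfun m₁ m₁ (θ₁ (-τ))) τ := by
      simpa [Function.comp_def, Pi.sub_def] using (hasDerivAt_const τ Real.pi).sub (hα.comp τ (hasDerivAt_neg τ))
    have hveq : vf g m₁ m₁ (c₁ τ) =
        (-(Real.cos (α₁ (-τ)) * Real.sin (2 * θ₁ (-τ))),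
         Real.sin (α₁ (-τ)) * Real.sin (2 * θ₁ (-τ)),
         Real.sin (α₁ (-τ)) * Real.sin (2 * θ₁ (-τ)) *
             (Real.exp (4 / (g : ℝ) * ξ₁ (-τ)) - mconst g m₁ m₁) +
           2 * Real.cos (α₁ (-τ)) * lfun m₁ m₁ (θ₁ (-τ))) := by
      have e1 : 2 * (Real.pi / 2 - θ₁ (-τ)) = Real.pi - 2 * θ₁ (-τ) := by ring
      simp only [hc₁, vf, lfun, e1, Real.sin_pi_sub, Real.cos_pi_sub,
        Real.cos_pi_div_two_sub, Real.sin_pi_div_two_sub, Prod.mk.injEq]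
      refine ⟨by ring, trivial, by ring⟩
    rw [hveq]
    exact d1.prodMk (d2.prodMk d3)
  have key2 : ∀ τ : ℝ, HasDerivAt c₂ (vf g m₁ m₁ (c₂ τ)) τ := fun τ =>
    isSolution_hasDerivAt h2 τ
  -- initial conditions agree
  have heq0 : c₂ 0 = c₁ 0 := by
    simp only [hc₁, hc₂, neg_zero, h1i.1, h1i.2.1, h1i.2.2, h2i.1, h2i.2.1, h2i.2.2]
  intro t
  set T : ℝ := |t| + 1 with hT
  have hcont1 : Continuous c₁ := continuous_iff_continuousAt.mpr fun τ => (key τ).continuousAt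
  have hcont2 : Continuous c₂ := continuous_iff_continuousAt.mpr fun τ => (key2 τ).continuousAt
  obtain ⟨R₁, hR₁⟩ := (isCompact_Icc (a := -T) (b := T)).exists_bound_of_continuousOn
    hcont1.continuousOn
  obtain ⟨R₂, hR₂⟩ := (isCompact_Icc (a := -T) (b := T)).exists_bound_of_continuousOn
    hcont2.continuousOn
  set R : ℝ := max R₁ R₂ with hR
  obtain ⟨K, hK⟩ := vf_lipschitz g m₁ m₁ R
  have ht0 : (0 : ℝ) ∈ Set.Ioo (-T) T := by
    constructor <;> [nlinarith [abs_nonneg t]; nlinarith [abs_nonneg t]]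
  have hmem : ∀ (f : ℝ → ℝ × ℝ × ℝ), (∀ x ∈ Set.Icc (-T) T, ‖f x‖ ≤ R₁ ∨ ‖f x‖ ≤ R₂) →
      ∀ τ ∈ Set.Ioo (-T) T, f τ ∈ Metric.closedBall (0 : ℝ × ℝ × ℝ) R := by
    intro f hf τ hτ
    rw [Metric.mem_closedBall, dist_zero_right]
    rcases hf τ (Set.Ioo_subset_Icc_self hτ) with h | h
    · exact h.trans (le_max_left _ _)
    · exact h.trans (le_max_right _ _)
  have huniq : Set.EqOn c₂ c₁ (Set.Ioo (-T) T) :=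
    ODE_solution_unique_of_mem_Ioo (v := fun _ => vf g m₁ m₁)
      (s := fun _ => Metric.closedBall (0 : ℝ × ℝ × ℝ) R) (fun _ _ => hK) ht0
      (fun τ hτ => ⟨key2 τ, hmem c₂ (fun x hx => Or.inr (hR₂ x hx)) τ hτ⟩)
      (fun τ hτ => ⟨key τ, hmem c₁ (fun x hx => Or.inl (hR₁ x hx)) τ hτ⟩)
      heq0
  have hmemt : t ∈ Set.Ioo (-T) T := by
    constructor <;> [nlinarith [neg_abs_le t, le_abs_self t]; nlinarith [le_abs_self t]]
  have := huniq hmemt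
  simp only [hc₁, hc₂, Prod.mk.injEq] at this
  exact ⟨this.1, this.2.1, this.2.2⟩
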